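/- arXiv:1101.2947 — 3 statements merged into one kernel-verified Lean document; each statement's English description precedes it below -/
import Mathlib

section
/- Let d be a positive integer and let u, v > 0 satisfy 1/u + 1/v = 1. For complex vectors a, b ∈ ℂ^d write ⟨a, b⟩ = ∑_{i=1}^d a_i b_i (the bilinear pairing, extended ℂ-bilinearly from the Euclidean inner product on ℝ^d). Then for all ξ, η ∈ ℂ^d and every x ∈ ℝ^d, ∫_{ℝ^d} exp( (√u/√v)⟨ξ, x − y⟩ − (u/2)⟨ξ, ξ⟩ − ⟨x − y, x − y⟩/(2v) ) · exp( (√v/√u)⟨η, y⟩ − (v/2)⟨η, η⟩ − ⟨y, y⟩/(2u) ) d_N y = exp( ⟨ξ + η, x/√(uv)⟩ − (1/2)⟨ξ + η, ξ + η⟩ − ⟨x, x⟩/(2uv) ), where the integral is with respect to the normalized Lebesgue measure d_N y on ℝ^d. -/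
open MeasureTheory Real

/-- The normalized Lebesgue measure `d_N x = (2π)^(−d/2) dx` on `ℝ^d`. -/
noncomputable def normalizedLebesgue (d : ℕ) : Measure (EuclideanSpace ℝ (Fin d)) :=
  ENNReal.ofReal ((2 * Real.pi) ^ (-(d : ℝ) / 2)) •
    (volume : Measure (EuclideanSpace ℝ (Fin d)))

/-- The complex bilinear pairing `⟨a, b⟩ = ∑ i, a i * b i` on `ℂ^d`. -/
noncomputable def cpair {d : ℕ} (a b : Fin d → ℂ) : ℂ := ∑ i, a i * b i

/-- The canonical embedding of `ℝ^d` into `ℂ^d`. -/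
noncomputable def cvec {d : ℕ} (x : EuclideanSpace ℝ (Fin d)) : Fin d → ℂ :=
  fun i => (x i : ℂ)

-- scalar identity 1: value of the per-coordinate Gaussian integral exponent
lemma aux_scalar (s t ξ η X : ℂ) (hs0 : s ≠ 0) (ht0 : t ≠ 0)
    (hrel : s^2*t^2 = s^2 + t^2) :
    (s/t)*ξ*X - (s^2/2)*ξ^2 - X^2/(2*t^2) - (t^2/2)*η^2
      + (X/t^2 - (s/t)*ξ + (t/s)*η)^2/2
    = (1/(s*t))*(ξ+η)*X - (1/2)*(ξ+η)^2 - X^2/(2*(s^2*t^2)) := by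
  have hs' : s * s⁻¹ = 1 := mul_inv_cancel₀ hs0
  have ht' : t * t⁻¹ = 1 := mul_inv_cancel₀ ht0
  have key : ((s/t)*ξ*X - (s^2/2)*ξ^2 - X^2/(2*t^2) - (t^2/2)*η^2
      + (X/t^2 - (s/t)*ξ + (t/s)*η)^2/2
      - ((1/(s*t))*(ξ+η)*X - (1/2)*(ξ+η)^2 - X^2/(2*(s^2*t^2)))) * (s^2*t^4)
      = (-(1/2)*X^2 - (1/2)*t^4*η^2 + s*t*ξ*X - (1/2)*s^2*t^2*ξ^2) * (s^2*t^2 - s^2 - t^2) := by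
    linear_combination
      ((1/2)*t^4*t⁻¹^2*X^2 + (1/2)*t^6*η^2 - s*t^4*t⁻¹*η*X - s*t^4*t⁻¹*ξ*X
        + (1/2)*s*t^4*s⁻¹*t⁻¹^2*X^2 + s*t^5*t⁻¹^2*η*X + (1/2)*s*t^6*s⁻¹*η^2
        - s^2*t^5*t⁻¹*ξ*η) * hs'
      + ((1/2)*t^2*X^2 + (1/2)*t^3*t⁻¹*X^2 - s*t^3*ξ*X + s*t^4*t⁻¹*η*X + (1/2)*s^2*X^2
        + (1/2)*s^2*t*t⁻¹*X^2 - (1/2)*s^2*t^2*X^2 + (1/2)*s^2*t^2*t⁻¹^2*X^2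
        - (1/2)*s^2*t^3*t⁻¹*X^2 + (1/2)*s^2*t^3*t⁻¹^3*X^2 - s^2*t^4*ξ*η - s^3*t*ξ*X
        - s^3*t^2*t⁻¹*ξ*X + s^3*t^3*ξ*X - s^3*t^3*t⁻¹^2*ξ*X + (1/2)*s^4*t^2*ξ^2
        + (1/2)*s^4*t^3*t⁻¹*ξ^2) * ht'
  have h0 : (s^2*t^4 : ℂ) ≠ 0 := by simp [hs0, ht0]
  have h2 : ((s/t)*ξ*X - (s^2/2)*ξ^2 - X^2/(2*t^2) - (t^2/2)*η^2
      + (X/t^2 - (s/t)*ξ + (t/s)*η)^2/2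
      - ((1/(s*t))*(ξ+η)*X - (1/2)*(ξ+η)^2 - X^2/(2*(s^2*t^2)))) * (s^2*t^4) = 0 := by
    rw [key, hrel]; ring
  rw [← sub_eq_zero]
  exact (mul_eq_zero.mp h2).resolve_right h0

-- scalar identity 2: per-coordinate exponent rearrangement into b Y² + c Y + d form
lemma aux_coord (s t ξ η X Y : ℂ) (hs0 : s ≠ 0) (ht0 : t ≠ 0)
    (hrel : s^2*t^2 = s^2 + t^2) :
    (s/t)*(ξ*(X-Y)) - (s^2/2)*ξ^2 - (X-Y)^2/(2*t^2)
      + ((t/s)*(η*Y) - (t^2/2)*η^2 - Y^2/(2*s^2))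
    = -(1/2)*Y^2 + (X/t^2 - (s/t)*ξ + (t/s)*η)*Y
      + ((s/t)*ξ*X - (s^2/2)*ξ^2 - X^2/(2*t^2) - (t^2/2)*η^2) := by
  have hs' : s * s⁻¹ = 1 := mul_inv_cancel₀ hs0
  have ht' : t * t⁻¹ = 1 := mul_inv_cancel₀ ht0
  have key : ((s/t)*(ξ*(X-Y)) - (s^2/2)*ξ^2 - (X-Y)^2/(2*t^2)
      + ((t/s)*(η*Y) - (t^2/2)*η^2 - Y^2/(2*s^2))
      - (-(1/2)*Y^2 + (X/t^2 - (s/t)*ξ + (t/s)*η)*Y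
        + ((s/t)*ξ*X - (s^2/2)*ξ^2 - X^2/(2*t^2) - (t^2/2)*η^2))) * (s^2*t^2)
      = ((1/2)*Y^2) * (s^2*t^2 - s^2 - t^2) := by
    linear_combination
      (-(1/2)*t^2*Y^2 - (1/2)*s*t^2*s⁻¹*Y^2) * hs'
      + (-(1/2)*s^2*Y^2 - (1/2)*s^2*t*t⁻¹*Y^2) * ht'
  have h0 : (s^2*t^2 : ℂ) ≠ 0 := by simp [hs0, ht0]
  have h2 : ((s/t)*(ξ*(X-Y)) - (s^2/2)*ξ^2 - (X-Y)^2/(2*t^2)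
      + ((t/s)*(η*Y) - (t^2/2)*η^2 - Y^2/(2*s^2))
      - (-(1/2)*Y^2 + (X/t^2 - (s/t)*ξ + (t/s)*η)*Y
        + ((s/t)*ξ*X - (s^2/2)*ξ^2 - X^2/(2*t^2) - (t^2/2)*η^2))) * (s^2*t^2) = 0 := by
    rw [key, hrel]; ring
  rw [← sub_eq_zero]
  exact (mul_eq_zero.mp h2).resolve_right h0

theorem gaussian_exponential_convolution
    (d : ℕ) (hd : 0 < d) (u v : ℝ) (hu : 0 < u) (hv : 0 < v)
    (huv : 1 / u + 1 / v = 1) (ξ η : Fin d → ℂ) (x : EuclideanSpace ℝ (Fin d)) :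
    (∫ y, Complex.exp ((Real.sqrt u / Real.sqrt v : ℂ) * cpair ξ (cvec (x - y))
          - (u / 2 : ℂ) * cpair ξ ξ
          - cpair (cvec (x - y)) (cvec (x - y)) / (2 * v : ℂ))
        * Complex.exp ((Real.sqrt v / Real.sqrt u : ℂ) * cpair η (cvec y)
          - (v / 2 : ℂ) * cpair η η
          - cpair (cvec y) (cvec y) / (2 * u : ℂ))
        ∂(normalizedLebesgue d))
    = Complex.exp ((1 / Real.sqrt (u * v) : ℂ) * cpair (ξ + η) (cvec x)
        - (1 / 2 : ℂ) * cpair (ξ + η) (ξ + η)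
        - cpair (cvec x) (cvec x) / (2 * u * v : ℂ)) := by
  classical
  set s : ℂ := (Real.sqrt u : ℂ) with hs_def
  set t : ℂ := (Real.sqrt v : ℂ) with ht_def
  have hs0 : s ≠ 0 := by
    simp [hs_def, Complex.ofReal_eq_zero, Real.sqrt_eq_zero', not_le, hu]
  have ht0 : t ≠ 0 := by
    simp [ht_def, Complex.ofReal_eq_zero, Real.sqrt_eq_zero', not_le, hv]
  have hsu : s^2 = (u : ℂ) := by
    rw [hs_def, ← Complex.ofReal_pow, Real.sq_sqrt hu.le]
  have htv : t^2 = (v : ℂ) := by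
    rw [ht_def, ← Complex.ofReal_pow, Real.sq_sqrt hv.le]
  have hst : (Real.sqrt (u * v) : ℂ) = s * t := by
    rw [hs_def, ht_def, ← Complex.ofReal_mul, Real.sqrt_mul hu.le]
  have huv' : u * v = u + v := by
    field_simp at huv
    linarith [huv]
  have hrel : s^2*t^2 = s^2 + t^2 := by
    rw [hsu, htv, ← Complex.ofReal_mul, ← Complex.ofReal_add, huv']
  -- per-coordinate coefficients
  set c : Fin d → ℂ := fun i => ((x i : ℂ)/t^2 - (s/t)*(ξ i) + (t/s)*(η i)) with hc_def
  set d0 : Fin d → ℂ := fun i =>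
    ((s/t)*(ξ i)*(x i : ℂ) - (s^2/2)*(ξ i)^2 - (x i : ℂ)^2/(2*t^2) - (t^2/2)*(η i)^2)
    with hd0_def
  -- step 1: unfold the measure
  rw [normalizedLebesgue, integral_smul_measure,
    ENNReal.toReal_ofReal (Real.rpow_nonneg (by positivity) _)]
  -- step 2: move to the product space
  rw [← ((EuclideanSpace.volume_preserving_symm_measurableEquiv_toLp (Fin d)).symm).integral_comp']
  -- step 3: integrand is a product over coordinates
  have hpt : ∀ y : Fin d → ℝ,
      (Complex.exp ((Real.sqrt u / Real.sqrt v : ℂ) * cpair ξ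
            (cvec (x - (MeasurableEquiv.toLp 2 (Fin d → ℝ)).symm.symm y))
          - (u / 2 : ℂ) * cpair ξ ξ
          - cpair (cvec (x - (MeasurableEquiv.toLp 2 (Fin d → ℝ)).symm.symm y))
              (cvec (x - (MeasurableEquiv.toLp 2 (Fin d → ℝ)).symm.symm y)) / (2 * v : ℂ))
        * Complex.exp ((Real.sqrt v / Real.sqrt u : ℂ) * cpair η
            (cvec ((MeasurableEquiv.toLp 2 (Fin d → ℝ)).symm.symm y))
          - (v / 2 : ℂ) * cpair η η
          - cpair (cvec ((MeasurableEquiv.toLp 2 (Fin d → ℝ)).symm.symm y))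
              (cvec ((MeasurableEquiv.toLp 2 (Fin d → ℝ)).symm.symm y)) / (2 * u : ℂ)))
      = ∏ i, Complex.exp (-(1/2) * (y i : ℂ)^2 + c i * (y i : ℂ) + d0 i) := by
    intro y
    rw [← Complex.exp_add, ← Complex.exp_sum]
    congr 1
    have hcoord : ∀ i, ((x - (MeasurableEquiv.toLp 2 (Fin d → ℝ)).symm.symm y) i : ℂ)
        = (x i : ℂ) - (y i : ℂ) := by
      intro i
      norm_cast
    have hY : ∀ i, ((MeasurableEquiv.toLp 2 (Fin d → ℝ)).symm.symm y) i = y i :=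
      fun i => rfl
    simp only [cpair, cvec, hcoord, hY]
    simp only [Finset.mul_sum, Finset.sum_div, ← Finset.sum_sub_distrib,
      ← Finset.sum_add_distrib]
    refine Finset.sum_congr rfl fun i _ => ?_
    simp only [hc_def, hd0_def]
    rw [← hsu, ← htv]
    linear_combination aux_coord s t (ξ i) (η i) (x i : ℂ) (y i : ℂ) hs0 ht0 hrel
  rw [integral_congr_ae (Filter.Eventually.of_forall hpt)]
  -- step 4: Fubini
  rw [MeasureTheory.integral_fintype_prod_volume_eq_prod (ι := Fin d)
    (f := fun i (Y : ℝ) => Complex.exp (-(1/2) * (Y : ℂ)^2 + c i * (Y : ℂ) + d0 i))]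
  -- step 5: evaluate each 1-D integral
  set K : ℝ := (2*Real.pi)^((1:ℝ)/2) with hK_def
  have hb : (-(1/2) : ℂ).re < 0 := by norm_num
  have h1d : ∀ i, (∫ Y : ℝ, Complex.exp (-(1/2) * (Y : ℂ)^2 + c i * (Y : ℂ) + d0 i))
      = (K : ℂ) * Complex.exp (d0 i + (c i)^2/2) := by
    intro i
    rw [integral_cexp_quadratic hb (c i) (d0 i)]
    congr 1
    · rw [hK_def, Complex.ofReal_cpow (by positivity)]
      push_cast
      norm_num
      congr 1
      ring
    · congr 1
      ring
  simp only [h1d]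
  rw [Finset.prod_mul_distrib, Finset.prod_const, ← Complex.exp_sum, Finset.card_univ,
    Fintype.card_fin]
  -- step 6: the normalization constants cancel
  have hnorm : ((2 * Real.pi) ^ (-(d : ℝ) / 2) : ℝ) •
      ((K : ℂ) ^ d * Complex.exp (∑ i, (d0 i + (c i)^2/2)))
      = Complex.exp (∑ i, (d0 i + (c i)^2/2)) := by
    rw [← Complex.ofReal_pow, hK_def, ← Real.rpow_natCast ((2*Real.pi)^((1:ℝ)/2)) d,
      ← Real.rpow_mul (by positivity)]
    rw [Complex.real_smul, ← mul_assoc, ← Complex.ofReal_mul,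
      ← Real.rpow_add (by positivity)]
    rw [show (-(d:ℝ)/2 + (1:ℝ)/2*(d:ℕ)) = 0 from by push_cast; ring, Real.rpow_zero]
    norm_num
  rw [hnorm]
  -- step 7: identify the exponent
  congr 1
  have hsum : ∀ i, d0 i + (c i)^2/2
      = (1/(s*t))*((ξ+η) i)*(x i : ℂ) - (1/2)*((ξ+η) i)^2 - (x i : ℂ)^2/(2*(s^2*t^2)) := by
    intro i
    simp only [hd0_def, hc_def, Pi.add_apply]
    linear_combination aux_scalar s t (ξ i) (η i) (x i : ℂ) hs0 ht0 hrel
  rw [Finset.sum_congr rfl fun i _ => hsum i]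
  simp only [cpair, cvec, hst, Pi.add_apply]
  simp only [Finset.mul_sum, Finset.sum_div, ← Finset.sum_sub_distrib]
  refine Finset.sum_congr rfl fun i _ => ?_
  rw [← hsu, ← htv]
  ring
end

section
/- Let d be a positive integer and let u, v > 1 satisfy 1/u + 1/v = 1. Let μ be the standard Gaussian measure on ℝ^d and let φ, ψ : ℝ^d → ℂ belong to L^∞(ℝ^d, μ). Define f_v(x) = φ(x/√v) e^{−⟨x,x⟩/(2v)} and g_u(x) = ψ(x/√u) e^{−⟨x,x⟩/(2u)}, and define W(y) = e^{⟨y,y⟩/2} · (f_v ⋆ g_u)(√(uv) · y), where ⋆ is convolution with respect to the normalized Lebesgue measure. Then W belongs to L^∞(ℝ^d, μ) and ‖W‖_{L^∞(μ)} ≤ ‖φ‖_{L^∞(μ)} · ‖ψ‖_{L^∞(μ)}. -/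
open MeasureTheory Real
open scoped ENNReal NNReal

/-- The standard Gaussian measure `dμ(x) = e^(−⟨x,x⟩/2) d_N x` on `ℝ^d`. -/
noncomputable def stdGaussian (d : ℕ) : Measure (EuclideanSpace ℝ (Fin d)) :=
  (normalizedLebesgue d).withDensity fun x => ENNReal.ofReal (Real.exp (-‖x‖ ^ 2 / 2))

lemma gauss_exp_identity {d : ℕ} (u v s : ℝ) (hu : 0 < u) (hv : 0 < v)
    (huv : 1/u + 1/v = 1) (hs : s ^ 2 = u * v) (y z : EuclideanSpace ℝ (Fin d)) :
    -‖s • y - z‖ ^ 2 / (2 * v) + -‖z‖ ^ 2 / (2 * u)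
      = -‖y‖ ^ 2 / 2 + -‖z - (s / v) • y‖ ^ 2 / 2 := by
  have huv' : u + v = u * v := by field_simp at huv; linarith
  have h1 : ‖s • y - z‖ ^ 2
      = s ^ 2 * ‖y‖ ^ 2 - 2 * (s * inner ℝ y z) + ‖z‖ ^ 2 := by
    rw [norm_sub_sq_real, norm_smul, real_inner_smul_left]
    simp [mul_pow, Real.norm_eq_abs, sq_abs]
  have h2 : ‖z - (s / v) • y‖ ^ 2
      = ‖z‖ ^ 2 - 2 * (s / v * inner ℝ y z) + (s/v) ^ 2 * ‖y‖ ^ 2 := by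
    rw [norm_sub_sq_real, norm_smul, real_inner_smul_right, real_inner_comm]
    simp [mul_pow, Real.norm_eq_abs, sq_abs, div_pow]
  rw [h1, h2, hs, div_pow, hs]
  have hu0 : u ≠ 0 := ne_of_gt hu
  have hv0 : v ≠ 0 := ne_of_gt hv
  field_simp
  linear_combination (u*‖y‖^2 - ‖z‖^2) * huv'

lemma normLeb_ac (d : ℕ) : normalizedLebesgue d ≪ (volume : Measure (EuclideanSpace ℝ (Fin d))) :=
  Measure.smul_absolutelyContinuous

lemma vol_ac_normLeb (d : ℕ) :
    (volume : Measure (EuclideanSpace ℝ (Fin d))) ≪ normalizedLebesgue d :=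
  Measure.absolutelyContinuous_smul (by positivity)

lemma stdGaussian_ac (d : ℕ) : stdGaussian d ≪ (volume : Measure (EuclideanSpace ℝ (Fin d))) :=
  (withDensity_absolutelyContinuous _ _).trans (normLeb_ac d)

lemma vol_ac_stdGaussian (d : ℕ) :
    (volume : Measure (EuclideanSpace ℝ (Fin d))) ≪ stdGaussian d := by
  refine (vol_ac_normLeb d).trans ?_
  exact withDensity_absolutelyContinuous'
    (by fun_prop : Measurable fun x : EuclideanSpace ℝ (Fin d) =>
      ENNReal.ofReal (Real.exp (-‖x‖ ^ 2 / 2))).aemeasurable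
    (Filter.Eventually.of_forall fun x => by positivity)

lemma gauss_int (d : ℕ) (b : EuclideanSpace ℝ (Fin d)) :
    ∫ z : EuclideanSpace ℝ (Fin d), Real.exp (-‖z - b‖ ^ 2 / 2) = (2 * π) ^ ((d : ℝ) / 2) := by
  have h := integral_sub_right_eq_self (μ := (volume : Measure (EuclideanSpace ℝ (Fin d))))
    (fun z => Real.exp (-‖z‖ ^ 2 / 2)) b
  rw [h]
  have : ∀ z : EuclideanSpace ℝ (Fin d), Real.exp (-‖z‖ ^ 2 / 2)
      = Real.exp (-(1/2 : ℝ) * ‖z‖ ^ 2) := by intro z; ring_nf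
  simp_rw [this]
  rw [GaussianFourier.integral_rexp_neg_mul_sq_norm (by norm_num : (0:ℝ) < 1/2)]
  simp [finrank_euclideanSpace_fin]
  ring_nf

lemma gauss_integrable (d : ℕ) (c : ℝ) (hc : 0 < c) :
    Integrable (fun z : EuclideanSpace ℝ (Fin d) => Real.exp (-‖z‖ ^ 2 / (2 * c))) := by
  have h : Integrable (fun z : EuclideanSpace ℝ (Fin d) =>
      Complex.exp (-(1/(2*c) : ℂ) * ‖z‖ ^ 2
        + (0:ℂ) * ((inner ℝ (0 : EuclideanSpace ℝ (Fin d)) z : ℝ) : ℂ))) :=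
    GaussianFourier.integrable_cexp_neg_mul_sq_norm_add (by norm_num; positivity) 0 0
  apply h.norm.congr
  filter_upwards with z
  have hz : (-(1/(2*(c:ℂ))) * ((‖z‖:ℂ)) ^ 2
      + (0:ℂ) * ((inner ℝ (0 : EuclideanSpace ℝ (Fin d)) z : ℝ) : ℂ))
      = (((-‖z‖^2/(2*c) : ℝ)) : ℂ) := by push_cast; ring
  rw [hz, Complex.norm_exp, Complex.ofReal_re]

lemma norm_cexp_ofReal (r : ℝ) : ‖Complex.exp (r : ℂ)‖ = Real.exp r := by
  rw [Complex.norm_exp, Complex.ofReal_re]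

theorem wick_holder_infty
    (d : ℕ) (hd : 0 < d)
    (u v : ℝ) (hu : 1 < u) (hv : 1 < v) (huv : 1 / u + 1 / v = 1)
    (φ ψ : EuclideanSpace ℝ (Fin d) → ℂ)
    (hφ : MemLp φ ⊤ (stdGaussian d))
    (hψ : MemLp ψ ⊤ (stdGaussian d))
    (fv gu W : EuclideanSpace ℝ (Fin d) → ℂ)
    (hfv : ∀ x, fv x = φ ((Real.sqrt v)⁻¹ • x)
        * Complex.exp ((-‖x‖ ^ 2 / (2 * v) : ℝ) : ℂ))
    (hgu : ∀ x, gu x = ψ ((Real.sqrt u)⁻¹ • x)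
        * Complex.exp ((-‖x‖ ^ 2 / (2 * u) : ℝ) : ℂ))
    (hW : ∀ y, W y = Complex.exp ((‖y‖ ^ 2 / 2 : ℝ) : ℂ)
        * ∫ z, fv (Real.sqrt (u * v) • y - z) * gu z ∂(normalizedLebesgue d)) :
    MemLp W ⊤ (stdGaussian d) ∧
    eLpNorm W ⊤ (stdGaussian d)
      ≤ eLpNorm φ ⊤ (stdGaussian d) * eLpNorm ψ ⊤ (stdGaussian d) := by
  have hu0 : (0:ℝ) < u := lt_trans one_pos hu
  have hv0 : (0:ℝ) < v := lt_trans one_pos hv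
  set s : ℝ := Real.sqrt (u * v) with hs_def
  have hs2 : s ^ 2 = u * v := Real.sq_sqrt (by positivity)
  have hsne : s ≠ 0 := by positivity
  have hsvne : (Real.sqrt v)⁻¹ ≠ 0 := by positivity
  have hsune : (Real.sqrt u)⁻¹ ≠ 0 := by positivity
  set Cφ : ℝ := (eLpNorm φ ⊤ (stdGaussian d)).toReal with hCφ_def
  set Cψ : ℝ := (eLpNorm ψ ⊤ (stdGaussian d)).toReal with hCψ_def
  have hCφ0 : 0 ≤ Cφ := ENNReal.toReal_nonneg
  have hCψ0 : 0 ≤ Cψ := ENNReal.toReal_nonneg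
  -- a.e. bounds wrt volume
  have hφv : ∀ᵐ x ∂(volume : Measure (EuclideanSpace ℝ (Fin d))), ‖φ x‖ ≤ Cφ := by
    refine Filter.Eventually.filter_mono ((vol_ac_stdGaussian d).ae_le) ?_
    filter_upwards [ae_le_eLpNormEssSup (f := φ) (μ := stdGaussian d)] with x hx
    have hne : eLpNormEssSup φ (stdGaussian d) ≠ ⊤ := by
      rw [← eLpNorm_exponent_top]; exact hφ.2.ne
    calc ‖φ x‖ = ((‖φ x‖₊ : ℝ≥0∞)).toReal := by simp
      _ ≤ (eLpNormEssSup φ (stdGaussian d)).toReal := ENNReal.toReal_mono hne hx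
      _ = Cφ := by rw [hCφ_def, eLpNorm_exponent_top]
  have hψv : ∀ᵐ x ∂(volume : Measure (EuclideanSpace ℝ (Fin d))), ‖ψ x‖ ≤ Cψ := by
    refine Filter.Eventually.filter_mono ((vol_ac_stdGaussian d).ae_le) ?_
    filter_upwards [ae_le_eLpNormEssSup (f := ψ) (μ := stdGaussian d)] with x hx
    have hne : eLpNormEssSup ψ (stdGaussian d) ≠ ⊤ := by
      rw [← eLpNorm_exponent_top]; exact hψ.2.ne
    calc ‖ψ x‖ = ((‖ψ x‖₊ : ℝ≥0∞)).toReal := by simp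
      _ ≤ (eLpNormEssSup ψ (stdGaussian d)).toReal := ENNReal.toReal_mono hne hx
      _ = Cψ := by rw [hCψ_def, eLpNorm_exponent_top]
  -- norms of fv, gu
  have hfv_norm : ∀ x, ‖fv x‖ = ‖φ ((Real.sqrt v)⁻¹ • x)‖ * Real.exp (-‖x‖ ^ 2 / (2 * v)) := by
    intro x; rw [hfv x, norm_mul, norm_cexp_ofReal]
  have hgu_norm : ∀ x, ‖gu x‖ = ‖ψ ((Real.sqrt u)⁻¹ • x)‖ * Real.exp (-‖x‖ ^ 2 / (2 * u)) := by
    intro x; rw [hgu x, norm_mul, norm_cexp_ofReal]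
  -- measurability of fv, gu wrt volume
  have hφm : AEStronglyMeasurable φ (volume : Measure (EuclideanSpace ℝ (Fin d))) :=
    hφ.1.mono_ac (vol_ac_stdGaussian d)
  have hψm : AEStronglyMeasurable ψ (volume : Measure (EuclideanSpace ℝ (Fin d))) :=
    hψ.1.mono_ac (vol_ac_stdGaussian d)
  have hexp_cont : ∀ c : ℝ, Continuous fun x : EuclideanSpace ℝ (Fin d) =>
      Complex.exp ((-‖x‖ ^ 2 / (2 * c) : ℝ) : ℂ) := by
    intro c; fun_prop
  have hfvm : AEStronglyMeasurable fv (volume : Measure (EuclideanSpace ℝ (Fin d))) := by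
    have h1 : AEStronglyMeasurable (fun x : EuclideanSpace ℝ (Fin d) =>
        φ ((Real.sqrt v)⁻¹ • x)) volume :=
      hφm.comp_quasiMeasurePreserving (Measure.quasiMeasurePreserving_smul _ hsvne)
    exact (h1.mul (hexp_cont v).aestronglyMeasurable).congr
      (Filter.Eventually.of_forall fun x => (hfv x).symm)
  have hgum : AEStronglyMeasurable gu (volume : Measure (EuclideanSpace ℝ (Fin d))) := by
    have h1 : AEStronglyMeasurable (fun x : EuclideanSpace ℝ (Fin d) =>
        ψ ((Real.sqrt u)⁻¹ • x)) volume :=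
      hψm.comp_quasiMeasurePreserving (Measure.quasiMeasurePreserving_smul _ hsune)
    exact (h1.mul (hexp_cont u).aestronglyMeasurable).congr
      (Filter.Eventually.of_forall fun x => (hgu x).symm)
  -- integrability of fv, gu wrt volume
  have hfv_int : Integrable fv (volume : Measure (EuclideanSpace ℝ (Fin d))) := by
    refine Integrable.mono' ((gauss_integrable d v hv0).const_mul Cφ) hfvm ?_
    have hb := (Measure.quasiMeasurePreserving_smul
      (volume : Measure (EuclideanSpace ℝ (Fin d))) hsvne).ae hφv
    filter_upwards [hb] with x hx
    rw [hfv_norm x]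
    exact mul_le_mul_of_nonneg_right hx (Real.exp_nonneg _)
  have hgu_int : Integrable gu (volume : Measure (EuclideanSpace ℝ (Fin d))) := by
    refine Integrable.mono' ((gauss_integrable d u hu0).const_mul Cψ) hgum ?_
    have hb := (Measure.quasiMeasurePreserving_smul
      (volume : Measure (EuclideanSpace ℝ (Fin d))) hsune).ae hψv
    filter_upwards [hb] with x hx
    rw [hgu_norm x]
    exact mul_le_mul_of_nonneg_right hx (Real.exp_nonneg _)
  -- the convolution is integrable hence a.e. strongly measurable
  set L : ℂ →L[ℂ] ℂ →L[ℂ] ℂ := ContinuousLinearMap.mul ℂ ℂ with hL_def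
  have hconv_int : Integrable (convolution gu fv L volume) volume :=
    hgu_int.integrable_convolution L hfv_int
  set cN : ℝ := (2 * π) ^ (-(d : ℝ) / 2) with hcN_def
  have hcN0 : 0 ≤ cN := by positivity
  have h_int_eq : ∀ x : EuclideanSpace ℝ (Fin d),
      (∫ z, fv (x - z) * gu z ∂(normalizedLebesgue d))
        = cN • convolution gu fv L volume x := by
    intro x
    rw [normalizedLebesgue, integral_smul_measure, ENNReal.toReal_ofReal hcN0]
    congr 1
    rw [convolution_def]
    exact integral_congr_ae (Filter.Eventually.of_forall fun z => by
      simp [hL_def, mul_comm])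
  have hWm : AEStronglyMeasurable W (stdGaussian d) := by
    have h1 : AEStronglyMeasurable (fun x : EuclideanSpace ℝ (Fin d) =>
        cN • convolution gu fv L volume x) volume := hconv_int.aestronglyMeasurable.const_smul cN
    have h2 : AEStronglyMeasurable (fun y : EuclideanSpace ℝ (Fin d) =>
        cN • convolution gu fv L volume (s • y)) volume :=
      h1.comp_quasiMeasurePreserving (Measure.quasiMeasurePreserving_smul _ hsne)
    have h3 : Continuous fun y : EuclideanSpace ℝ (Fin d) =>
        Complex.exp ((‖y‖ ^ 2 / 2 : ℝ) : ℂ) := by fun_prop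
    refine ((h3.aestronglyMeasurable.mul h2).mono_ac (stdGaussian_ac d)).congr
      (Filter.Eventually.of_forall fun y => ?_)
    simp only [Pi.mul_apply]
    rw [hW y, h_int_eq]
  -- pointwise bound
  have hbound : ∀ y, ‖W y‖ ≤ Cφ * Cψ := by
    intro y
    have h1 : ‖W y‖ = Real.exp (‖y‖ ^ 2 / 2)
        * ‖∫ z, fv (s • y - z) * gu z ∂(normalizedLebesgue d)‖ := by
      rw [hW y, norm_mul, norm_cexp_ofReal]
    have h2 : ‖∫ z, fv (s • y - z) * gu z ∂(normalizedLebesgue d)‖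
        ≤ ∫ z, ‖fv (s • y - z) * gu z‖ ∂(normalizedLebesgue d) :=
      norm_integral_le_integral_norm _
    -- integrable majorant
    have hmaj : Integrable (fun z : EuclideanSpace ℝ (Fin d) =>
        (Cφ * Cψ) * (Real.exp (-‖y‖ ^ 2 / 2) * Real.exp (-‖z - (s / v) • y‖ ^ 2 / 2)))
        (normalizedLebesgue d) := by
      have hg1 : Integrable (fun z : EuclideanSpace ℝ (Fin d) =>
          Real.exp (-‖z‖ ^ 2 / 2)) volume := by
        have := gauss_integrable d 1 one_pos
        simpa using this
      have hg2 : Integrable (fun z : EuclideanSpace ℝ (Fin d) =>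
          Real.exp (-‖z - (s / v) • y‖ ^ 2 / 2)) volume := hg1.comp_sub_right _
      have hg3 : Integrable (fun z : EuclideanSpace ℝ (Fin d) =>
          Real.exp (-‖z - (s / v) • y‖ ^ 2 / 2)) (normalizedLebesgue d) := by
        rw [normalizedLebesgue]
        exact hg2.smul_measure ENNReal.ofReal_ne_top
      exact (hg3.const_mul _).const_mul _
    -- a.e. comparison
    have hb1 : ∀ᵐ z ∂(normalizedLebesgue d), ‖φ ((Real.sqrt v)⁻¹ • (s • y - z))‖ ≤ Cφ := by
      refine Filter.Eventually.filter_mono ((normLeb_ac d).ae_le) ?_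
      have hq : Measure.QuasiMeasurePreserving
          (fun z : EuclideanSpace ℝ (Fin d) => (Real.sqrt v)⁻¹ • (s • y - z))
          volume volume :=
        (Measure.quasiMeasurePreserving_smul _ hsvne).comp
          (quasiMeasurePreserving_sub_left_of_right_invariant volume (s • y))
      exact hq.ae hφv
    have hb2 : ∀ᵐ z ∂(normalizedLebesgue d), ‖ψ ((Real.sqrt u)⁻¹ • z)‖ ≤ Cψ := by
      refine Filter.Eventually.filter_mono ((normLeb_ac d).ae_le) ?_
      exact (Measure.quasiMeasurePreserving_smul _ hsune).ae hψv
    have h3 : ∫ z, ‖fv (s • y - z) * gu z‖ ∂(normalizedLebesgue d)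
        ≤ ∫ z, (Cφ * Cψ) * (Real.exp (-‖y‖ ^ 2 / 2)
            * Real.exp (-‖z - (s / v) • y‖ ^ 2 / 2)) ∂(normalizedLebesgue d) := by
      refine integral_mono_of_nonneg (Filter.Eventually.of_forall fun z => norm_nonneg _)
        hmaj ?_
      filter_upwards [hb1, hb2] with z h1' h2'
      rw [norm_mul, hfv_norm, hgu_norm]
      have hexp : Real.exp (-‖s • y - z‖ ^ 2 / (2 * v)) * Real.exp (-‖z‖ ^ 2 / (2 * u))
          = Real.exp (-‖y‖ ^ 2 / 2) * Real.exp (-‖z - (s / v) • y‖ ^ 2 / 2) := by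
        rw [← Real.exp_add, ← Real.exp_add,
          gauss_exp_identity u v s hu0 hv0 huv hs2 y z]
      calc ‖φ ((Real.sqrt v)⁻¹ • (s • y - z))‖ * Real.exp (-‖s • y - z‖ ^ 2 / (2 * v))
            * (‖ψ ((Real.sqrt u)⁻¹ • z)‖ * Real.exp (-‖z‖ ^ 2 / (2 * u)))
          ≤ Cφ * Real.exp (-‖s • y - z‖ ^ 2 / (2 * v))
            * (Cψ * Real.exp (-‖z‖ ^ 2 / (2 * u))) := by
            apply mul_le_mul
            · exact mul_le_mul_of_nonneg_right h1' (Real.exp_nonneg _)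
            · exact mul_le_mul_of_nonneg_right h2' (Real.exp_nonneg _)
            · positivity
            · positivity
        _ = (Cφ * Cψ) * (Real.exp (-‖s • y - z‖ ^ 2 / (2 * v))
              * Real.exp (-‖z‖ ^ 2 / (2 * u))) := by ring
        _ = (Cφ * Cψ) * (Real.exp (-‖y‖ ^ 2 / 2)
              * Real.exp (-‖z - (s / v) • y‖ ^ 2 / 2)) := by rw [hexp]
    have h5 : ∫ z, (Cφ * Cψ) * (Real.exp (-‖y‖ ^ 2 / 2)
          * Real.exp (-‖z - (s / v) • y‖ ^ 2 / 2)) ∂(normalizedLebesgue d)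
        = (Cφ * Cψ) * Real.exp (-‖y‖ ^ 2 / 2) := by
      rw [normalizedLebesgue, integral_smul_measure, ENNReal.toReal_ofReal (by positivity)]
      simp_rw [mul_assoc]
      rw [integral_const_mul, integral_const_mul, integral_const_mul,
        gauss_int d ((s / v) • y), smul_eq_mul]
      rw [show (2 * π) ^ (-(d:ℝ) / 2) * (Cφ * (Cψ * (rexp (-‖y‖ ^ 2 / 2)
          * (2 * π) ^ ((d:ℝ) / 2))))
        = (Cφ * Cψ * rexp (-‖y‖ ^ 2 / 2))
          * ((2 * π) ^ (-(d:ℝ) / 2) * (2 * π) ^ ((d:ℝ) / 2)) from by ring,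
        ← Real.rpow_add (by positivity),
        show (-(d:ℝ)/2 + (d:ℝ)/2) = 0 from by ring, Real.rpow_zero, mul_one]
      ring
    calc ‖W y‖ = Real.exp (‖y‖ ^ 2 / 2)
          * ‖∫ z, fv (s • y - z) * gu z ∂(normalizedLebesgue d)‖ := h1
      _ ≤ Real.exp (‖y‖ ^ 2 / 2) * ((Cφ * Cψ) * Real.exp (-‖y‖ ^ 2 / 2)) := by
          refine mul_le_mul_of_nonneg_left ?_ (Real.exp_nonneg _)
          exact h2.trans (h3.trans_eq h5)
      _ = (Cφ * Cψ) * (Real.exp (‖y‖ ^ 2 / 2) * Real.exp (-‖y‖ ^ 2 / 2)) := by ring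
      _ = Cφ * Cψ := by
          rw [← Real.exp_add, show ‖y‖^2/2 + -‖y‖^2/2 = 0 from by ring,
            Real.exp_zero, mul_one]
  refine ⟨memLp_top_of_bound hWm (Cφ * Cψ) (Filter.Eventually.of_forall hbound), ?_⟩
  calc eLpNorm W ⊤ (stdGaussian d) ≤ ENNReal.ofReal (Cφ * Cψ) := by
        rw [eLpNorm_exponent_top]
        exact eLpNormEssSup_le_of_ae_bound (Filter.Eventually.of_forall hbound)
    _ = eLpNorm φ ⊤ (stdGaussian d) * eLpNorm ψ ⊤ (stdGaussian d) := by
        rw [ENNReal.ofReal_mul hCφ0, hCφ_def, hCψ_def,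
          ENNReal.ofReal_toReal hφ.2.ne, ENNReal.ofReal_toReal hψ.2.ne]
end

section
/- Let u, v, p, q, r be real numbers, all greater than 1, such that 1/u + 1/v = 1 and 1/(u(p − 1)) + 1/(v(q − 1)) = 1/(r − 1); write p' = p/(p − 1), q' = q/(q − 1), r' = r/(r − 1), and set α = q'/(v √(p' q' r')), β = r'/√(p' q' r'), γ = p'/(u √(p' q' r')). Define for s, t > 0 the quantity Φ(s, t) = (p^{1/p} q^{1/q} / r^{1/r}) · s^{1/p} t^{1/q} / ( (s + t + β²)^{1/r'} · (γ² s + α² t + s t)^{1/r} ). Then sup_{s > 0, t > 0} Φ(s, t) = v^{1/r − 1/p} · u^{1/r − 1/q}, and moreover Φ(s, t) = v^{1/r − 1/p} · u^{1/r − 1/q} if and only if s = 1/(p v) and t = 1/(q u). -/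
open Real Set

lemma log_cc2 {x y a b : ℝ} (hx : 0 < x) (hy : 0 < y) (ha : 0 < a) (hb : 0 < b)
    (hab : a + b = 1) :
    a * log x + b * log y ≤ log (a * x + b * y) ∧
      (a * log x + b * log y = log (a * x + b * y) ↔ x = y) := by
  rcases eq_or_ne x y with h | h
  · subst h
    have h1 : a * x + b * x = x := by rw [← add_mul, hab, one_mul]
    have h2 : a * log x + b * log x = log x := by rw [← add_mul, hab, one_mul]
    rw [h1, h2]
    simp
  · have := strictConcaveOn_log_Ioi.2 (mem_Ioi.2 hx) (mem_Ioi.2 hy) h ha hb hab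
    simp only [smul_eq_mul] at this
    exact ⟨this.le, ⟨fun he => absurd he this.ne, fun he => absurd he h⟩⟩

lemma log_cc3 {x y z a b c : ℝ} (hx : 0 < x) (hy : 0 < y) (hz : 0 < z)
    (ha : 0 < a) (hb : 0 < b) (hc : 0 < c) (habc : a + b + c = 1) :
    a * log x + b * log y + c * log z ≤ log (a * x + b * y + c * z) ∧
      (a * log x + b * log y + c * log z = log (a * x + b * y + c * z) ↔ x = y ∧ y = z) := by
  set m : ℝ := b + c with hm
  have hm0 : 0 < m := by positivity
  set w : ℝ := (b * y + c * z) / m with hw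
  have hw0 : 0 < w := by positivity
  have hww : b / m * y + c / m * z = w := by rw [hw]; ring
  have step1 := log_cc2 hy hz (div_pos hb hm0) (div_pos hc hm0) (by field_simp; exact hm.symm)
  rw [hww] at step1
  have step2 := log_cc2 hx hw0 ha hm0 (by linarith)
  have hmw : a * x + m * w = a * x + b * y + c * z := by
    rw [hw, mul_div_cancel₀ _ hm0.ne']; ring
  rw [hmw] at step2
  have key1 : m * (b / m * log y + c / m * log z) = b * log y + c * log z := by
    field_simp
  have mono := mul_le_mul_of_nonneg_left step1.1 hm0.le
  rw [key1] at mono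
  constructor
  · linarith [step2.1]
  · constructor
    · intro he
      have hbz : b / m * log y + c / m * log z = log w := by
        by_contra hne
        have lt1 : b / m * log y + c / m * log z < log w := lt_of_le_of_ne step1.1 hne
        have mono2 := mul_lt_mul_of_pos_left lt1 hm0
        rw [key1] at mono2
        linarith [step2.1]
      have hyz : y = z := step1.2.1 hbz
      have hxw : x = w := by
        apply step2.2.1
        have h3 : m * log w = b * log y + c * log z := by rw [← hbz, key1]
        linarith
      refine ⟨?_, hyz⟩
      rw [hxw, hw, ← hyz]
      field_simp
      ring
    · rintro ⟨h1, h2⟩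
      have hxw : x = w := by rw [hw, ← h2, ← h1]; field_simp; ring
      have e1 : b / m * log y + c / m * log z = log w := step1.2.2 h2
      have e2 : a * log x + m * log w = log (a * x + b * y + c * z) := step2.2.2 hxw
      have h3 : m * log w = b * log y + c * log z := by rw [← e1, key1]
      linarith

set_option maxHeartbeats 1000000 in
theorem weighted_young_sup_constant
    (u v p q r : ℝ)
    (hu : 1 < u) (hv : 1 < v) (hp : 1 < p) (hq : 1 < q) (hr : 1 < r)
    (huv : 1 / u + 1 / v = 1)
    (hcond : 1 / (u * (p - 1)) + 1 / (v * (q - 1)) = 1 / (r - 1))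
    (p' q' r' : ℝ) (hp' : p' = p / (p - 1)) (hq' : q' = q / (q - 1)) (hr' : r' = r / (r - 1))
    (α β γ : ℝ)
    (hα : α = q' / (v * Real.sqrt (p' * q' * r')))
    (hβ : β = r' / Real.sqrt (p' * q' * r'))
    (hγ : γ = p' / (u * Real.sqrt (p' * q' * r')))
    (Φ : ℝ → ℝ → ℝ)
    (hΦ : ∀ s t : ℝ, Φ s t = (p ^ (1 / p) * q ^ (1 / q) / r ^ (1 / r))
        * (s ^ (1 / p) * t ^ (1 / q)
          / ((s + t + β ^ 2) ^ (1 / r') * (γ ^ 2 * s + α ^ 2 * t + s * t) ^ (1 / r)))) :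
    (∀ s t : ℝ, 0 < s → 0 < t →
        Φ s t ≤ v ^ (1 / r - 1 / p) * u ^ (1 / r - 1 / q)) ∧
    (∀ s t : ℝ, 0 < s → 0 < t →
        (Φ s t = v ^ (1 / r - 1 / p) * u ^ (1 / r - 1 / q)
          ↔ s = 1 / (p * v) ∧ t = 1 / (q * u))) := by
  have hu0 : (0:ℝ) < u := by linarith
  have hv0 : (0:ℝ) < v := by linarith
  have hp0 : (0:ℝ) < p := by linarith
  have hq0 : (0:ℝ) < q := by linarith
  have hr0 : (0:ℝ) < r := by linarith
  have hp1 : (0:ℝ) < p - 1 := by linarith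
  have hq1 : (0:ℝ) < q - 1 := by linarith
  have hr1 : (0:ℝ) < r - 1 := by linarith
  have hp'1 : 1 < p' := by rw [hp', lt_div_iff₀ hp1]; linarith
  have hq'1 : 1 < q' := by rw [hq', lt_div_iff₀ hq1]; linarith
  have hr'1 : 1 < r' := by rw [hr', lt_div_iff₀ hr1]; linarith
  have hp'0 : (0:ℝ) < p' := by linarith
  have hq'0 : (0:ℝ) < q' := by linarith
  have hr'0 : (0:ℝ) < r' := by linarith
  have hprod : (0:ℝ) < p' * q' * r' := by positivity
  -- squares of α β γ
  have hβ2 : β ^ 2 = r' / (p' * q') := by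
    rw [hβ, div_pow, sq_sqrt hprod.le]
    field_simp
  have hγ2 : γ ^ 2 = p' / (u ^ 2 * (q' * r')) := by
    rw [hγ, div_pow, mul_pow, sq_sqrt hprod.le]
    field_simp
  have hα2 : α ^ 2 = q' / (v ^ 2 * (p' * r')) := by
    rw [hα, div_pow, mul_pow, sq_sqrt hprod.le]
    field_simp
  -- key conjugate-exponent relation
  have e1 : p' = 1 + 1 / (p - 1) := by rw [hp']; field_simp; ring
  have e2 : q' = 1 + 1 / (q - 1) := by rw [hq']; field_simp; ring
  have e3 : r' = 1 + 1 / (r - 1) := by rw [hr']; field_simp; ring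
  have hune : u ≠ 0 := ne_of_gt hu0
  have hvne : v ≠ 0 := ne_of_gt hv0
  have hpne : p ≠ 0 := ne_of_gt hp0
  have hqne : q ≠ 0 := ne_of_gt hq0
  have hrne : r ≠ 0 := ne_of_gt hr0
  have hp1ne : p - 1 ≠ 0 := ne_of_gt hp1
  have hq1ne : q - 1 ≠ 0 := ne_of_gt hq1
  have hr1ne : r - 1 ≠ 0 := ne_of_gt hr1
  have hp'ne : p' ≠ 0 := ne_of_gt hp'0
  have hq'ne : q' ≠ 0 := ne_of_gt hq'0
  have hr'ne : r' ≠ 0 := ne_of_gt hr'0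
  have hsum : p' / u + q' / v = r' := by
    rw [e1, e2, e3]
    have h : (1 + 1/(p-1))/u + (1 + 1/(q-1))/v
        = (1/u + 1/v) + (1/(u*(p-1)) + 1/(v*(q-1))) := by field_simp; ring
    rw [h, huv, hcond]
  -- bridging identities between p and p'
  have hpinv : 1 / p = 1 - 1 / p' := by rw [hp', one_div_div]; field_simp; ring
  have hqinv : 1 / q = 1 - 1 / q' := by rw [hq', one_div_div]; field_simp; ring
  have hrinv : 1 / r = 1 - 1 / r' := by rw [hr', one_div_div]; field_simp; ring
  -- cleared forms
  have R1 : v + u = u * v := by field_simp at huv; linarith [huv]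
  have R2 : p' * v + q' * u = r' * (u * v) := by
    have h := hsum
    field_simp at h
    linarith [h]
  -- the scalar coefficient identities
  have f1 : 1/(p*v) = (1 - 1/p')/v := by rw [← hpinv]; ring
  have f2 : 1/(q*u) = (1 - 1/q')/u := by rw [← hqinv]; ring
  have hE1 : 1/(p*v) + 1/(q*u) + β ^ 2 = 1 := by
    rw [f1, f2, hβ2]
    field_simp
    have hu1 : u - 1 ≠ 0 := ne_of_gt (by linarith)
    rw [show r' = (p'*v + q'*u)/(u*v) by rw [eq_div_iff (by positivity : u*v ≠ 0)]; linear_combination (-1 : ℝ) * R2]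
    rw [show v = u/(u-1) by rw [eq_div_iff hu1]; linear_combination (-1 : ℝ) * R1]
    field_simp
    ring
  have hp'1ne : p' - 1 ≠ 0 := ne_of_gt (by linarith)
  have hq'1ne : q' - 1 ≠ 0 := ne_of_gt (by linarith)
  have hr'1ne : r' - 1 ≠ 0 := ne_of_gt (by linarith)
  have hp2 : p = p' / (p' - 1) := by rw [e1]; field_simp; ring
  have hq2 : q = q' / (q' - 1) := by rw [e2]; field_simp; ring
  have hr2 : r = r' / (r' - 1) := by rw [e3]; field_simp; ring
  -- term-level canonical forms (unconditional)
  have T1 : γ^2*u/p = (p'-1)/(u*q'*r') := by rw [hγ2, hp2]; field_simp; try ring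
  have T2 : α^2*v/q = (q'-1)/(v*p'*r') := by rw [hα2, hq2]; field_simp; try ring
  have T3 : 1/(p*q) = (p'-1)*(q'-1)/(p'*q') := by rw [hp2, hq2]; field_simp; try ring
  have T4 : 1/(p*v) = (p'-1)/(p'*v) := by rw [hp2]; field_simp; try ring
  have T5 : 1/(q*u) = (q'-1)/(q'*u) := by rw [hq2]; field_simp; try ring
  have T6 : 1/r = (r'-1)/r' := by rw [hr2]; field_simp
  have hu1ne : u - 1 ≠ 0 := ne_of_gt (by linarith)
  have hv3 : v = u/(u-1) := by rw [eq_div_iff hu1ne]; linear_combination (-1 : ℝ) * R1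
  have hr'4 : r' = (p'*v + q'*u)/(u*v) := by
    rw [eq_div_iff (by positivity : u*v ≠ 0)]; linear_combination (-1 : ℝ) * R2
  -- prime-world constrained identities
  have Tp : 1/p = (p'-1)/p' := by rw [hp2]; field_simp
  have Tq : 1/q = (q'-1)/q' := by rw [hq2]; field_simp
  have G2 : (p'-1)/(u*q'*r') + (q'-1)/(v*p'*r') + (p'-1)*(q'-1)/(p'*q') = (r'-1)/r' := by
    field_simp
    rw [hr'4, hv3]
    field_simp
    ring
  have hE2 : γ^2*u*r/p + α^2*v*r/q + r/(p*q) = 1 := by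
    have h : γ^2*u*r/p + α^2*v*r/q + r/(p*q) = r*(γ^2*u/p + α^2*v/q + 1/(p*q)) := by ring
    rw [h, T1, T2, T3, G2, ← T6]
    field_simp
  have hE3 : (1/r')*(1/(p*v)) + (1/r)*(γ^2*u*r/p + r/(p*q)) = 1/p := by
    have expand : (1/r)*(γ^2*u*r/p + r/(p*q)) = γ^2*u/p + 1/(p*q) := by
      field_simp
    rw [expand, T4, T1, T3, Tp]
    field_simp
    rw [hr'4, hv3]
    field_simp
    ring
  have hE4 : (1/r')*(1/(q*u)) + (1/r)*(α^2*v*r/q + r/(p*q)) = 1/q := by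
    have expand : (1/r)*(α^2*v*r/q + r/(p*q)) = α^2*v/q + 1/(p*q) := by
      field_simp
    rw [expand, T5, T2, T3, Tq]
    field_simp
    rw [hr'4, hv3]
    field_simp
    ring
  have hE5 : (1/r)*(γ^2*u*r/p) - (1/r')*(1/(q*u)) = 1/r - 1/q := by
    have expand : (1/r)*(γ^2*u*r/p) = γ^2*u/p := by field_simp; try ring
    rw [expand, T1, T5, T6, Tq]
    field_simp
    rw [hr'4, hv3]
    field_simp
    ring
  have hE6 : (1/r)*(α^2*v*r/q) - (1/r')*(1/(p*v)) = 1/r - 1/p := by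
    have expand : (1/r)*(α^2*v*r/q) = α^2*v/q := by field_simp; try ring
    rw [expand, T2, T4, T6, Tp]
    field_simp
    rw [hr'4, hv3]
    field_simp
    ring
  set M := v ^ (1/r - 1/p) * u ^ (1/r - 1/q) with hMdef
  have hM0 : 0 < M := by positivity
  have hlogM : log M = (1/r - 1/p)*log v + (1/r - 1/q)*log u := by
    rw [hMdef, log_mul (by positivity) (by positivity), log_rpow hv0, log_rpow hu0]
  have key : ∀ s t : ℝ, 0 < s → 0 < t →
      Φ s t ≤ M ∧ (Φ s t = M ↔ s = 1/(p*v) ∧ t = 1/(q*u)) := by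
    intro s t hs ht
    have hA0 : (0:ℝ) < s + t + β^2 := by positivity
    have hB0 : (0:ℝ) < γ^2*s + α^2*t + s*t := by positivity
    have hΦ0 : 0 < Φ s t := by
      rw [hΦ s t]
      have h1 : (0:ℝ) < (s + t + β ^ 2) ^ (1/r') := rpow_pos_of_pos hA0 _
      have h2 : (0:ℝ) < (γ ^ 2 * s + α ^ 2 * t + s * t) ^ (1/r) := rpow_pos_of_pos hB0 _
      have h3 : (0:ℝ) < p ^ (1/p) * q ^ (1/q) / r ^ (1/r) := by positivity
      positivity
    have hc1 : (0:ℝ) < 1/(p*v) := by positivity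
    have hc2 : (0:ℝ) < 1/(q*u) := by positivity
    have hβ0 : (0:ℝ) < β^2 := by rw [hβ2]; positivity
    have hw1 : (0:ℝ) < γ^2*u*r/p := by rw [hγ2]; positivity
    have hw2 : (0:ℝ) < α^2*v*r/q := by rw [hα2]; positivity
    have hw3 : (0:ℝ) < r/(p*q) := by positivity
    -- AM-GM for the first factor
    have AMA := log_cc3 (x := p*v*s) (y := q*u*t) (z := 1)
      (by positivity) (by positivity) one_pos hc1 hc2 hβ0 hE1
    have hAsum : 1/(p*v) * (p*v*s) + 1/(q*u) * (q*u*t) + β^2 * 1 = s + t + β^2 := by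
      field_simp
    have l4 : log (p*v*s) = log p + log v + log s := by
      rw [log_mul (by positivity) hs.ne', log_mul hpne hvne]
    have l5 : log (q*u*t) = log q + log u + log t := by
      rw [log_mul (by positivity) ht.ne', log_mul hqne hune]
    have expA : 1/(p*v) * log (p*v*s) + 1/(q*u) * log (q*u*t) + β^2 * log 1
        = 1/(p*v)*(log p + log v + log s) + 1/(q*u)*(log q + log u + log t) := by
      rw [log_one, l4, l5]; ring
    rw [hAsum, expA] at AMA
    -- AM-GM for the second factor
    have AMB := log_cc3 (x := s*p/(u*r)) (y := t*q/(v*r)) (z := s*t*p*q/r)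
      (by positivity) (by positivity) (by positivity) hw1 hw2 hw3 hE2
    have hBsum : γ^2*u*r/p * (s*p/(u*r)) + α^2*v*r/q * (t*q/(v*r)) + r/(p*q) * (s*t*p*q/r)
        = γ^2*s + α^2*t + s*t := by
      field_simp
    have l1 : log (s*p/(u*r)) = log s + log p - (log u + log r) := by
      rw [log_div (by positivity) (by positivity), log_mul hs.ne' hpne, log_mul hune hrne]
    have l2 : log (t*q/(v*r)) = log t + log q - (log v + log r) := by
      rw [log_div (by positivity) (by positivity), log_mul ht.ne' hqne, log_mul hvne hrne]
    have l3 : log (s*t*p*q/r) = log s + log t + log p + log q - log r := by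
      rw [log_div (by positivity) hrne, log_mul (by positivity) hqne,
        log_mul (by positivity) hpne, log_mul hs.ne' ht.ne']
    have expB : γ^2*u*r/p * log (s*p/(u*r)) + α^2*v*r/q * log (t*q/(v*r))
          + r/(p*q) * log (s*t*p*q/r)
        = γ^2*u*r/p*(log s + log p - (log u + log r))
          + α^2*v*r/q*(log t + log q - (log v + log r))
          + r/(p*q)*(log s + log t + log p + log q - log r) := by
      rw [l1, l2, l3]
    rw [hBsum, expB] at AMB
    -- log of Φ
    have m1 : log (p ^ (1/p) * q ^ (1/q) / r ^ (1/r))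
        = (1/p)*log p + (1/q)*log q - (1/r)*log r := by
      rw [log_div (by positivity) (by positivity), log_mul (by positivity) (by positivity),
        log_rpow hp0, log_rpow hq0, log_rpow hr0]
    have m2 : log (s ^ (1/p) * t ^ (1/q)
          / ((s + t + β^2) ^ (1/r') * (γ^2*s + α^2*t + s*t) ^ (1/r)))
        = (1/p)*log s + (1/q)*log t
          - ((1/r')*log (s + t + β^2) + (1/r)*log (γ^2*s + α^2*t + s*t)) := by
      rw [log_div (by positivity) (by positivity)]
      rw [log_mul (by positivity) (by positivity)]
      rw [log_mul (ne_of_gt (rpow_pos_of_pos hA0 _)) (ne_of_gt (rpow_pos_of_pos hB0 _))]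
      rw [log_rpow hs, log_rpow ht, log_rpow hA0, log_rpow hB0]
    have hlog : log (Φ s t) = ((1/p)*log p + (1/q)*log q - (1/r)*log r)
        + ((1/p)*log s + (1/q)*log t
          - ((1/r')*log (s + t + β^2) + (1/r)*log (γ^2*s + α^2*t + s*t))) := by
      rw [hΦ s t, log_mul (by positivity) (by positivity), m1, m2]
    -- the exact linear identity
    have star : ((1/p)*log p + (1/q)*log q - (1/r)*log r)
        + ((1/p)*log s + (1/q)*log t
          - ((1/r')*(1/(p*v)*(log p + log v + log s) + 1/(q*u)*(log q + log u + log t))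
            + (1/r)*(γ^2*u*r/p*(log s + log p - (log u + log r))
              + α^2*v*r/q*(log t + log q - (log v + log r))
              + r/(p*q)*(log s + log t + log p + log q - log r))))
        = (1/r - 1/p)*log v + (1/r - 1/q)*log u := by
      linear_combination (-(log s + log p))*hE3 + (-(log t + log q))*hE4
        + log u * hE5 + log v * hE6 + ((1/r)*log r)*hE2
    have gap : log (Φ s t) = log M
        + ((1/r')*((1/(p*v)*(log p + log v + log s) + 1/(q*u)*(log q + log u + log t))
              - log (s + t + β^2))
          + (1/r)*((γ^2*u*r/p*(log s + log p - (log u + log r))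
              + α^2*v*r/q*(log t + log q - (log v + log r))
              + r/(p*q)*(log s + log t + log p + log q - log r))
              - log (γ^2*s + α^2*t + s*t))) := by
      rw [hlog, hlogM]
      linear_combination star
    have hr'inv : (0:ℝ) < 1/r' := by positivity
    have hrinv0 : (0:ℝ) < 1/r := by positivity
    have k1 := mul_le_mul_of_nonneg_left (sub_nonpos.2 AMA.1) hr'inv.le
    have k2 := mul_le_mul_of_nonneg_left (sub_nonpos.2 AMB.1) hrinv0.le
    have hle : Φ s t ≤ M := by
      have hloge : log (Φ s t) ≤ log M := by
        rw [gap]; linarith [k1, k2]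
      have := Real.exp_le_exp.2 hloge
      rwa [Real.exp_log hΦ0, Real.exp_log hM0] at this
    refine ⟨hle, ?_, ?_⟩
    · intro heq
      have hlogeq : log (Φ s t) = log M := by rw [heq]
      have hAeq : 1/(p*v)*(log p + log v + log s) + 1/(q*u)*(log q + log u + log t)
          = log (s + t + β^2) := by
        by_contra hne
        have hlt := lt_of_le_of_ne AMA.1 hne
        have k1' : (1/r')*((1/(p*v)*(log p + log v + log s)
            + 1/(q*u)*(log q + log u + log t)) - log (s + t + β^2)) < 0 :=
          mul_neg_of_pos_of_neg hr'inv (by linarith)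
        rw [hlogeq] at gap
        linarith [k1', k2, gap]
      obtain ⟨hxy1, hxy2⟩ := AMA.2.1 hAeq
      have hpv1 : p*v*s = 1 := hxy1.trans hxy2
      constructor
      · rw [eq_div_iff (by positivity : p*v ≠ 0)]
        linear_combination hpv1
      · rw [eq_div_iff (by positivity : q*u ≠ 0)]
        linear_combination hxy2
    · rintro ⟨hs1, ht1⟩
      have hAeq := AMA.2.2 ⟨by rw [hs1, ht1]; field_simp, by rw [ht1]; field_simp⟩
      have hBeq := AMB.2.2 ⟨by rw [hs1, ht1]; field_simp, by rw [hs1, ht1]; field_simp⟩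
      rw [hAeq, hBeq] at gap
      simp only [sub_self, mul_zero, add_zero, zero_add] at gap
      have := congrArg Real.exp gap
      rwa [Real.exp_log hΦ0, Real.exp_log hM0] at this
  exact ⟨fun s t hs ht => (key s t hs ht).1, fun s t hs ht => (key s t hs ht).2⟩
end
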